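/- Let h : ℝ → ℝ be q-times continuously differentiable (q ≥ 1) on a compact interval T = [a,b] with midpoint c. Suppose p(t) = ∑_{j=0}^r b_j B_j^r((t−a)/(b−a)) equals the order-(q−1) Taylor polynomial of h at c for all t ∈ T (Bernstein form after affine change of variables), and |h^{(q)}| ≤ B_U on T. Then for all t ∈ T and any ρ > 0, h(t) ≤ (1/ρ) ln(∑_{j=0}^r exp(ρ b_j)) + (1/q!)((b−a)/2)^q B_U. -/

import Mathlib

open Set

/-- Bernstein basis polynomial of degree `r`. -/
noncomputable def bern (r j : ℕ) (τ : ℝ) : ℝ :=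
  (r.choose j : ℝ) * τ ^ j * (1 - τ) ^ (r - j)

lemma iterDeriv_subset {f : ℝ → ℝ} {s t : Set ℝ} (hst : s ⊆ t)
    (hs : UniqueDiffOn ℝ s) (ht : UniqueDiffOn ℝ t) {n m : ℕ} (hf : ContDiffOn ℝ n f t)
    (hm : m ≤ n) {x : ℝ} (hx : x ∈ s) :
    iteratedDerivWithin m f s x = iteratedDerivWithin m f t x := by
  have H : HasFTaylorSeriesUpToOn (n : ℕ∞) f (ftaylorSeriesWithin ℝ f t) s :=
    (hf.ftaylorSeriesWithin ht).mono hst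
  have h2 := H.eq_iteratedFDerivWithin_of_uniqueDiffOn (by exact_mod_cast hm) hs hx
  rw [iteratedDerivWithin_eq_iteratedFDerivWithin, iteratedDerivWithin_eq_iteratedFDerivWithin,
    ← h2]
  rfl

lemma taylor_lagrange_left {f : ℝ → ℝ} {x x₀ : ℝ} {n : ℕ} (hx : x < x₀)
    (hf : ContDiffOn ℝ n f (Icc x x₀))
    (hf' : DifferentiableOn ℝ (iteratedDerivWithin n f (Icc x x₀)) (Ioo x x₀)) :
    ∃ x' ∈ Ioo x x₀, f x - taylorWithinEval f n (Icc x x₀) x₀ x =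
      iteratedDerivWithin (n + 1) f (Icc x x₀) x' * (x - x₀) ^ (n + 1) /
        (Nat.factorial (n + 1)) := by
  have gcont : ContinuousOn (fun t : ℝ => (x - t) ^ (n + 1)) (Icc x x₀) := by fun_prop
  rcases exists_ratio_hasDerivAt_eq_ratio_slope
      (fun t => taylorWithinEval f n (Icc x x₀) t x)
      (fun t => ((Nat.factorial n : ℝ)⁻¹ * (x - t) ^ n) •
        iteratedDerivWithin (n + 1) f (Icc x x₀) t) hx
      (continuousOn_taylorWithinEval (uniqueDiffOn_Icc hx) hf)
      (fun y hy => taylorWithinEval_hasDerivAt_Ioo x hx hy hf hf')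
      (fun t => (x - t) ^ (n + 1)) (fun t => -(n + 1 : ℝ) * (x - t) ^ n) gcont
      (fun y _ => monomial_has_deriv_aux y x _) with ⟨y, hy, h⟩
  refine ⟨y, hy, ?_⟩
  have hyne : (x - y) ^ n ≠ 0 := pow_ne_zero _ (sub_ne_zero.mpr hy.1.ne)
  have hfac : (Nat.factorial n : ℝ) ≠ 0 := Nat.cast_ne_zero.mpr n.factorial_ne_zero
  simp only [sub_self, ne_eq, Nat.succ_ne_zero, not_false_eq_true, zero_pow, sub_zero,
    taylorWithinEval_self, smul_eq_mul] at h
  rw [Nat.factorial_succ]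
  field_simp at h ⊢
  have h2 : (x - x₀) ^ (n + 1) * iteratedDerivWithin (n + 1) f (Icc x x₀) y =
      (taylorWithinEval f n (Icc x x₀) x₀ x - f x) * (-1 + -(n : ℝ)) * Nat.factorial n :=
    by linear_combination h
  push_cast
  linear_combination -h2

lemma taylor_remainder_midpoint {n : ℕ} {a b : ℝ} (hab : a < b) {h : ℝ → ℝ}
    (hsmooth : ContDiffOn ℝ (n + 1) h (Icc a b)) {BU : ℝ}
    (hder : ∀ ξ ∈ Icc a b, |iteratedDerivWithin (n + 1) h (Icc a b) ξ| ≤ BU)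
    {t : ℝ} (ht : t ∈ Icc a b) :
    h t - ∑ i ∈ Finset.range (n + 1),
        iteratedDerivWithin i h (Icc a b) ((a + b) / 2) / (Nat.factorial i)
          * (t - (a + b) / 2) ^ i
      ≤ (1 / (Nat.factorial (n + 1) : ℝ)) * ((b - a) / 2) ^ (n + 1) * BU := by
  set c : ℝ := (a + b) / 2 with hc_def
  have hac : a ≤ c := by simp only [hc_def]; linarith
  have hcb : c ≤ b := by simp only [hc_def]; linarith
  have hc : c ∈ Icc a b := ⟨hac, hcb⟩
  have hBU : 0 ≤ BU := (abs_nonneg _).trans (hder c hc)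
  have habs : |t - c| ≤ (b - a) / 2 := by
    rw [abs_le]; constructor <;> simp only [hc_def] <;> [linarith [ht.1]; linarith [ht.2]]
  have hfacpos : (0 : ℝ) < Nat.factorial (n + 1) := by positivity
  have hba : (0 : ℝ) ≤ (b - a) / 2 := by linarith
  have hsmooth' : ContDiffOn ℝ ((n + 1 : ℕ) : ℕ∞) h (Icc a b) := by exact_mod_cast hsmooth
  have hbig : DifferentiableOn ℝ (iteratedDerivWithin n h (Icc a b)) (Icc a b) :=
    hsmooth.differentiableOn_iteratedDerivWithin (mod_cast n.lt_succ_self)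
      (uniqueDiffOn_Icc hab)
  -- helper facts for a subinterval
  have key : ∀ u v : ℝ, u < v → Icc u v ⊆ Icc a b → c ∈ Icc u v →
      (∀ y ∈ Ioo u v, DifferentiableWithinAt ℝ
        (iteratedDerivWithin n h (Icc u v)) (Ioo u v) y) ∧
      ContDiffOn ℝ n h (Icc u v) ∧
      taylorWithinEval h n (Icc u v) c t = ∑ i ∈ Finset.range (n + 1),
        iteratedDerivWithin i h (Icc a b) c / (Nat.factorial i) * (t - c) ^ i := by
    intro u v huv hsub hcuv
    have hcd : ContDiffOn ℝ n h (Icc u v) :=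
      (hsmooth.mono hsub).of_le (by exact_mod_cast n.le_succ)
    have heqon : ∀ z ∈ Icc u v,
        iteratedDerivWithin n h (Icc u v) z = iteratedDerivWithin n h (Icc a b) z :=
      fun z hz => iterDeriv_subset hsub (uniqueDiffOn_Icc huv) (uniqueDiffOn_Icc hab)
        hsmooth' n.le_succ hz
    refine ⟨fun y hy => ?_, hcd, ?_⟩
    · exact ((hbig y (hsub (Ioo_subset_Icc_self hy))).mono
        (Ioo_subset_Icc_self.trans hsub)).congr
        (fun z hz => heqon z (Ioo_subset_Icc_self hz)) (heqon y (Ioo_subset_Icc_self hy))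
    · rw [taylor_within_apply]
      refine Finset.sum_congr rfl fun k hk => ?_
      rw [iterDeriv_subset hsub (uniqueDiffOn_Icc huv) (uniqueDiffOn_Icc hab) hsmooth'
        (le_trans (Nat.lt_succ_iff.mp (Finset.mem_range.mp hk)) n.le_succ) hcuv, smul_eq_mul]
      ring
  have bound : ∀ ξ ∈ Icc a b,
      iteratedDerivWithin (n + 1) h (Icc a b) ξ * (t - c) ^ (n + 1) /
          (Nat.factorial (n + 1))
        ≤ (1 / (Nat.factorial (n + 1) : ℝ)) * ((b - a) / 2) ^ (n + 1) * BU := by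
    intro ξ hξ
    have h1 : iteratedDerivWithin (n + 1) h (Icc a b) ξ * (t - c) ^ (n + 1)
        ≤ BU * ((b - a) / 2) ^ (n + 1) := by
      calc iteratedDerivWithin (n + 1) h (Icc a b) ξ * (t - c) ^ (n + 1)
          ≤ |iteratedDerivWithin (n + 1) h (Icc a b) ξ * (t - c) ^ (n + 1)| := le_abs_self _
        _ = |iteratedDerivWithin (n + 1) h (Icc a b) ξ| * |t - c| ^ (n + 1) := by
            rw [abs_mul, abs_pow]
        _ ≤ BU * ((b - a) / 2) ^ (n + 1) :=
            mul_le_mul (hder ξ hξ) (pow_le_pow_left₀ (abs_nonneg _) habs _)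
              (by positivity) hBU
    calc iteratedDerivWithin (n + 1) h (Icc a b) ξ * (t - c) ^ (n + 1) /
          (Nat.factorial (n + 1))
        ≤ BU * ((b - a) / 2) ^ (n + 1) / (Nat.factorial (n + 1)) := by
          gcongr
      _ = (1 / (Nat.factorial (n + 1) : ℝ)) * ((b - a) / 2) ^ (n + 1) * BU := by ring
  rcases lt_trichotomy t c with hlt | heq | hgt
  · obtain ⟨hdiff, hcd, htay⟩ := key t c hlt (Icc_subset_Icc ht.1 hcb) (right_mem_Icc.mpr hlt.le)
    obtain ⟨ξ, hξ, hrem⟩ := taylor_lagrange_left hlt hcd hdiff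
    have hξab : ξ ∈ Icc a b := (Icc_subset_Icc ht.1 hcb) (Ioo_subset_Icc_self hξ)
    rw [← htay, hrem, iterDeriv_subset (Icc_subset_Icc ht.1 hcb) (uniqueDiffOn_Icc hlt)
      (uniqueDiffOn_Icc hab) hsmooth' le_rfl (Ioo_subset_Icc_self hξ)]
    exact bound ξ hξab
  · have hsum : ∑ i ∈ Finset.range (n + 1),
        iteratedDerivWithin i h (Icc a b) c / (Nat.factorial i) * (t - c) ^ i = h t := by
      rw [Finset.sum_eq_single_of_mem 0 (Finset.mem_range.mpr (Nat.succ_pos n))]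
      · simp [heq, iteratedDerivWithin_zero]
      · intro i _ hi
        rw [heq, sub_self, zero_pow hi, mul_zero]
    rw [hsum, sub_self]
    positivity
  · obtain ⟨hdiff, hcd, htay⟩ := key c t hgt (Icc_subset_Icc hac ht.2) (left_mem_Icc.mpr hgt.le)
    have hL := taylor_mean_remainder_lagrange (x := t) (x₀ := c) (n := n) hgt.ne
      (by rwa [uIcc_of_le hgt.le]) (by rw [uIcc_of_le hgt.le, uIoo_of_le hgt.le]; exact hdiff)
    rw [uIcc_of_le hgt.le, uIoo_of_le hgt.le] at hL
    obtain ⟨ξ, hξ, hrem⟩ := hL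
    have hξab : ξ ∈ Icc a b := (Icc_subset_Icc hac ht.2) (Ioo_subset_Icc_self hξ)
    rw [← htay, hrem, iterDeriv_subset (Icc_subset_Icc hac ht.2) (uniqueDiffOn_Icc hgt)
      (uniqueDiffOn_Icc hab) hsmooth' le_rfl (Ioo_subset_Icc_self hξ)]
    exact bound ξ hξab

/-- Validity of the smoothed Taylor–Bernstein upper bound (Theorem 1, upper bound part):
if the Bernstein form `∑ b_j B_j^r((t-a)/(b-a))` agrees on `[a,b]` with the order-`(q-1)`
Taylor polynomial of `h` at the midpoint `c = (a+b)/2`, and `|h^{(q)}| ≤ B_U` on `[a,b]`,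
then for all `t ∈ [a,b]` and `ρ > 0`,
`h(t) ≤ (1/ρ) ln(∑ exp(ρ b_j)) + (1/q!)((b-a)/2)^q B_U`. -/
theorem taylor_bernstein_upper_bound (q : ℕ) (hq : 1 ≤ q) (r : ℕ)
    (a b : ℝ) (hab : a < b)
    (h : ℝ → ℝ) (hsmooth : ContDiffOn ℝ q h (Icc a b))
    (bc : ℕ → ℝ)
    (hpoly : ∀ t ∈ Icc a b,
      ∑ j ∈ Finset.range (r + 1), bc j * bern r j ((t - a) / (b - a))
        = ∑ i ∈ Finset.range q,
            iteratedDerivWithin i h (Icc a b) ((a + b) / 2) / (Nat.factorial i)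
              * (t - (a + b) / 2) ^ i)
    (BU : ℝ)
    (hder : ∀ ξ ∈ Icc a b, |iteratedDerivWithin q h (Icc a b) ξ| ≤ BU) :
    ∀ t ∈ Icc a b, ∀ ρ : ℝ, 0 < ρ →
      h t ≤ (1 / ρ) * Real.log (∑ j ∈ Finset.range (r + 1), Real.exp (ρ * bc j))
            + (1 / (Nat.factorial q : ℝ)) * ((b - a) / 2) ^ q * BU := by
  obtain ⟨n, rfl⟩ : ∃ n, q = n + 1 := ⟨q - 1, (Nat.succ_pred_eq_of_pos hq).symm⟩
  intro t ht ρ hρ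
  have hrem : h t - ∑ i ∈ Finset.range (n + 1),
      iteratedDerivWithin i h (Icc a b) ((a + b) / 2) / (Nat.factorial i)
        * (t - (a + b) / 2) ^ i
      ≤ (1 / (Nat.factorial (n + 1) : ℝ)) * ((b - a) / 2) ^ (n + 1) * BU :=
    taylor_remainder_midpoint hab (by exact_mod_cast hsmooth) hder ht
  -- LSE part
  set τ : ℝ := (t - a) / (b - a) with hτ
  have hτ0 : 0 ≤ τ := div_nonneg (by linarith [ht.1]) (by linarith)
  have hτ1 : τ ≤ 1 := (div_le_one (by linarith)).mpr (by linarith [ht.2])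
  have hw : ∀ j, 0 ≤ bern r j τ := fun j =>
    mul_nonneg (mul_nonneg (by positivity) (pow_nonneg hτ0 _))
      (pow_nonneg (by linarith) _)
  have hwsum : ∑ j ∈ Finset.range (r + 1), bern r j τ = 1 := by
    have := add_pow τ (1 - τ) r
    simp only [add_sub_cancel, one_pow] at this
    rw [show (1 : ℝ) = (τ + (1 - τ)) ^ r by rw [add_sub_cancel, one_pow], add_pow]
    exact Finset.sum_congr rfl fun k _ => by unfold bern; ring
  set S : ℝ := ∑ j ∈ Finset.range (r + 1), Real.exp (ρ * bc j) with hS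
  have hSpos : 0 < S := by
    refine Finset.sum_pos (fun j _ => Real.exp_pos _) ⟨0, Finset.mem_range.mpr (Nat.succ_pos r)⟩
  have hM : ∀ j ∈ Finset.range (r + 1), bc j ≤ (1 / ρ) * Real.log S := by
    intro j hj
    have hle : Real.exp (ρ * bc j) ≤ S :=
      Finset.single_le_sum (fun i _ => (Real.exp_pos (ρ * bc i)).le) hj
    have h1 : ρ * bc j ≤ Real.log S := (Real.le_log_iff_exp_le hSpos).mpr hle
    calc bc j = (ρ * bc j) / ρ := by field_simp
      _ ≤ Real.log S / ρ := by gcongr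
      _ = 1 / ρ * Real.log S := by ring
  have hLSE : ∑ j ∈ Finset.range (r + 1), bc j * bern r j τ ≤ (1 / ρ) * Real.log S := by
    calc ∑ j ∈ Finset.range (r + 1), bc j * bern r j τ
        ≤ ∑ j ∈ Finset.range (r + 1), (1 / ρ) * Real.log S * bern r j τ :=
          Finset.sum_le_sum fun j hj =>
            mul_le_mul_of_nonneg_right (hM j hj) (hw j)
      _ = (1 / ρ) * Real.log S * ∑ j ∈ Finset.range (r + 1), bern r j τ := by
          rw [Finset.mul_sum]
      _ = (1 / ρ) * Real.log S := by rw [hwsum, mul_one]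
  have hP := hpoly t ht
  rw [← hτ] at hP
  linarith [hP, hrem, hLSE]
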